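/- Let σ ∈ ℤ, c ∈ ℚ_p, and let r ∈ ℤ satisfy r ≥ −σ. Then the set {n ∈ R_σ : |n − c|_p ≤ p^r} is finite and has exactly p^{r+σ} elements. -/

import Mathlib

open MeasureTheory

/-- Action of the `p`-adic affine group on complex-valued functions:
`(G(a,b)f)(x) = |a|_p^{-1/2} f((x-b)/a)`. -/
noncomputable def Gact (p : ℕ) [Fact p.Prime] (a b : ℚ_[p]) (f : ℚ_[p] → ℂ) : ℚ_[p] → ℂ :=
  fun x => ((‖a‖ ^ (-(1/2) : ℝ) : ℝ) : ℂ) * f ((x - b) / a)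

/-- `Ω(|x|_p)`: the indicator function of the unit ball `ℤ_p`. -/
noncomputable def Omega (p : ℕ) [Fact p.Prime] : ℚ_[p] → ℂ :=
  fun x => if ‖x‖ ≤ 1 then 1 else 0

/-- `R_σ`: the set of finite sums `∑_{l=-δ}^{σ-1} n_l p^l` with digits `n_l ∈ {0,…,p-1}`,
a complete set of representatives of `ℚ_p / p^σ ℤ_p`. -/
def Rset (p : ℕ) [Fact p.Prime] (σ : ℤ) : Set ℚ_[p] :=
  { x | ∃ (δ : ℕ) (d : ℤ → ℕ), (∀ l, d l < p) ∧
      x = ∑ l ∈ Finset.Icc (-(δ : ℤ)) (σ - 1), (d l : ℚ_[p]) * (p : ℚ_[p]) ^ l }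

/- ### Auxiliary lemmas -/

lemma digit_sum_lt {p : ℕ} (hp : 1 < p) (N : ℕ) (d : ℕ → ℕ) (hd : ∀ j, d j < p) :
    ∑ j ∈ Finset.range N, d j * p ^ j < p ^ N := by
  induction N with
  | zero => simp
  | succ N ih =>
    rw [Finset.sum_range_succ, pow_succ]
    have h1 : d N + 1 ≤ p := hd N
    have h2 : (0:ℕ) < p ^ N := Nat.pow_pos (by omega)
    nlinarith [ih]

lemma exists_digits {p : ℕ} (hp : 1 < p) :
    ∀ N : ℕ, ∀ m : ℕ, m < p ^ N →
      ∃ d : ℕ → ℕ, (∀ j, d j < p) ∧ m = ∑ j ∈ Finset.range N, d j * p ^ j := by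
  intro N
  induction N with
  | zero =>
    intro m hm
    simp only [pow_zero, Nat.lt_one_iff] at hm
    exact ⟨fun _ => 0, fun _ => by show 0 < p; omega, by simp [hm]⟩
  | succ N ih =>
    intro m hm
    have hp0 : 0 < p := by omega
    have hdiv : m / p < p ^ N := by
      rw [Nat.div_lt_iff_lt_mul hp0]
      calc m < p ^ (N+1) := hm
        _ = p ^ N * p := pow_succ p N
    obtain ⟨d, hd, hsum⟩ := ih (m / p) hdiv
    refine ⟨fun j => match j with | 0 => m % p | (j+1) => d j, ?_, ?_⟩
    · intro j
      match j with
      | 0 => exact Nat.mod_lt _ hp0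
      | (j+1) => exact hd j
    · rw [Finset.sum_range_succ']
      simp only []
      have : ∑ j ∈ Finset.range N, d j * p ^ (j + 1)
          = (∑ j ∈ Finset.range N, d j * p ^ j) * p := by
        rw [Finset.sum_mul]
        apply Finset.sum_congr rfl
        intro j _
        rw [pow_succ, mul_assoc]
      rw [this, ← hsum, pow_zero, mul_one]
      rw [mul_comm]
      exact (Nat.div_add_mod m p).symm

lemma sum_reindex {M : Type*} [AddCommMonoid M] (δ : ℕ) (σ : ℤ) (f : ℤ → M) :
    ∑ l ∈ Finset.Icc (-(δ:ℤ)) (σ-1), f l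
      = ∑ j ∈ Finset.range ((σ+δ).toNat), f ((j:ℤ) - δ) := by
  refine Finset.sum_nbij' (i := fun l => (l + δ).toNat) (j := fun j => (j:ℤ) - δ)
    ?_ ?_ ?_ ?_ ?_
  · intro a ha
    simp only [Finset.mem_Icc] at ha
    simp only [Finset.mem_range]
    omega
  · intro a ha
    simp only [Finset.mem_range] at ha
    simp only [Finset.mem_Icc]
    omega
  · intro a ha
    simp only [Finset.mem_Icc] at ha
    omega
  · intro a ha
    simp only [Finset.mem_range] at ha
    omega
  · intro a ha
    simp only [Finset.mem_Icc] at ha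
    congr 1
    omega

lemma zpow_split (p : ℕ) [Fact p.Prime] (j δ : ℕ) :
    (p:ℚ_[p]) ^ ((j:ℤ) - δ) = (p:ℚ_[p])^j * (p:ℚ_[p])^(-(δ:ℤ)) := by
  have hpQ : (p:ℚ_[p]) ≠ 0 := Nat.cast_ne_zero.mpr (Fact.out : p.Prime).ne_zero
  rw [sub_eq_add_neg, zpow_add₀ hpQ, zpow_natCast]

lemma mem_Rset_of (p : ℕ) [Fact p.Prime] (σ : ℤ) (δ : ℕ) (m : ℕ)
    (hσ : 0 ≤ σ + δ) (hm : m < p ^ (σ + δ).toNat) :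
    ((m : ℚ_[p]) * (p:ℚ_[p]) ^ (-(δ:ℤ))) ∈ Rset p σ := by
  have hp1 : 1 < p := (Fact.out : p.Prime).one_lt
  obtain ⟨d, hd, hsum⟩ := exists_digits hp1 _ m hm
  refine ⟨δ, fun l => if (0:ℤ) ≤ l + δ then d (l + δ).toNat else 0, ?_, ?_⟩
  · intro l
    dsimp only
    split
    · exact hd _
    · omega
  · rw [sum_reindex δ σ (fun l => ((if (0:ℤ) ≤ l + δ then d (l + δ).toNat else 0 : ℕ) : ℚ_[p]) * (p:ℚ_[p]) ^ l)]
    have : ∀ j ∈ Finset.range ((σ+δ).toNat),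
        ((if (0:ℤ) ≤ ((j:ℤ) - δ) + δ then d (((j:ℤ) - δ) + δ).toNat else 0 : ℕ) : ℚ_[p])
            * (p:ℚ_[p]) ^ ((j:ℤ) - δ)
          = ((d j : ℚ_[p]) * (p:ℚ_[p])^j) * (p:ℚ_[p])^(-(δ:ℤ)) := by
      intro j _
      rw [if_pos (by omega), zpow_split]
      have : (((j:ℤ) - δ) + δ).toNat = j := by omega
      rw [this, mul_assoc]
    rw [Finset.sum_congr rfl this, ← Finset.sum_mul]
    congr 1
    rw [hsum]
    push_cast
    ring

lemma Rset_elim (p : ℕ) [Fact p.Prime] (σ : ℤ) (x : ℚ_[p]) (hx : x ∈ Rset p σ) :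
    ∃ δ : ℕ, 0 ≤ σ + (δ:ℤ) ∧ ∃ m : ℕ, m < p ^ (σ + δ).toNat ∧
      x = (m:ℚ_[p]) * (p:ℚ_[p]) ^ (-(δ:ℤ)) := by
  have hp1 : 1 < p := (Fact.out : p.Prime).one_lt
  obtain ⟨δ, d, hd, hxe⟩ := hx
  set δ' : ℕ := max δ (-σ).toNat with hδ'
  have hδδ' : δ ≤ δ' := le_max_left _ _
  have hσδ' : 0 ≤ σ + (δ':ℤ) := by
    have h1 : (-σ).toNat ≤ δ' := le_max_right _ _
    have h2 := Int.self_le_toNat (-σ)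
    omega
  set D : ℤ → ℕ := fun l => if -(δ:ℤ) ≤ l then d l else 0 with hD
  have hDlt : ∀ l, D l < p := by
    intro l; simp only [hD]; split
    · exact hd l
    · omega
  have hxD : x = ∑ l ∈ Finset.Icc (-(δ':ℤ)) (σ-1), (D l : ℚ_[p]) * (p:ℚ_[p]) ^ l := by
    rw [hxe]
    have hsub : Finset.Icc (-(δ:ℤ)) (σ-1) ⊆ Finset.Icc (-(δ':ℤ)) (σ-1) := by
      apply Finset.Icc_subset_Icc _ le_rfl
      omega
    have h1 : ∑ l ∈ Finset.Icc (-(δ':ℤ)) (σ-1), (D l : ℚ_[p]) * (p:ℚ_[p]) ^ l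
        = ∑ l ∈ Finset.Icc (-(δ:ℤ)) (σ-1), (D l : ℚ_[p]) * (p:ℚ_[p]) ^ l := by
      refine (Finset.sum_subset hsub ?_).symm
      intro l hl hl2
      simp only [Finset.mem_Icc] at hl hl2
      have hneg : ¬ (-(δ:ℤ) ≤ l) := by omega
      simp only [hD]
      rw [if_neg hneg]
      simp
    rw [h1]
    apply Finset.sum_congr rfl
    intro l hl
    simp only [Finset.mem_Icc] at hl
    simp only [hD]
    rw [if_pos hl.1]
  rw [sum_reindex δ' σ (fun l => (D l : ℚ_[p]) * (p:ℚ_[p]) ^ l)] at hxD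
  set N' := (σ + δ').toNat with hN'
  set e : ℕ → ℕ := fun j => D ((j:ℤ) - δ') with he
  have hsum : ∀ j ∈ Finset.range N',
      (D ((j:ℤ) - δ') : ℚ_[p]) * (p:ℚ_[p]) ^ ((j:ℤ) - δ')
        = ((e j : ℚ_[p]) * (p:ℚ_[p])^j) * (p:ℚ_[p])^(-(δ':ℤ)) := by
    intro j _
    rw [zpow_split, he, mul_assoc]
  rw [Finset.sum_congr rfl hsum, ← Finset.sum_mul] at hxD
  refine ⟨δ', hσδ', ∑ j ∈ Finset.range N', e j * p ^ j, ?_, ?_⟩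
  · exact digit_sum_lt hp1 N' e (fun j => hDlt _)
  · rw [hxD]
    congr 1
    push_cast
    ring

lemma rep_of_norm_le (p : ℕ) [Fact p.Prime] (σ : ℤ) (x : ℚ_[p]) (δ₀ : ℕ)
    (hσ : 0 ≤ σ + (δ₀:ℤ)) (hx : x ∈ Rset p σ) (hxn : ‖x‖ ≤ (p:ℝ)^(δ₀:ℤ)) :
    ∃ m : ℕ, m < p ^ (σ + δ₀).toNat ∧ x = (m:ℚ_[p]) * (p:ℚ_[p]) ^ (-(δ₀:ℤ)) := by
  have hp : p.Prime := Fact.out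
  have hp1 : 1 < p := hp.one_lt
  have hpQ : (p:ℚ_[p]) ≠ 0 := Nat.cast_ne_zero.mpr hp.ne_zero
  have hp0R : (0:ℝ) < p := by exact_mod_cast hp.pos
  obtain ⟨δ, hσδ, m', hm', hxm⟩ := Rset_elim p σ x hx
  rcases le_or_gt δ δ₀ with hle | hlt
  · -- pad up
    refine ⟨m' * p ^ (δ₀ - δ), ?_, ?_⟩
    · have h1 : (σ + δ).toNat + (δ₀ - δ) = (σ + δ₀).toNat := by omega
      calc m' * p ^ (δ₀ - δ) < p ^ (σ + δ).toNat * p ^ (δ₀ - δ) :=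
            mul_lt_mul_of_pos_right hm' (Nat.pow_pos (by omega))
        _ = p ^ (σ + δ₀).toNat := by rw [← pow_add, h1]
    · rw [hxm]
      push_cast
      rw [mul_assoc]
      congr 1
      rw [← zpow_natCast (p:ℚ_[p]) (δ₀ - δ), ← zpow_add₀ hpQ]
      congr 1
      omega
  · -- divide down
    set w : ℕ := δ - δ₀ with hw
    have hw0 : 0 < w := by omega
    have hnorm : ‖(m' : ℚ_[p])‖ ≤ (p:ℝ) ^ (-(w:ℤ)) := by
      have h1 : (m' : ℚ_[p]) = x * (p:ℚ_[p]) ^ (δ:ℤ) := by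
        rw [hxm, mul_assoc, ← zpow_add₀ hpQ]
        simp
      rw [h1, norm_mul, Padic.norm_p_zpow]
      calc ‖x‖ * (p:ℝ) ^ (-(δ:ℤ)) ≤ (p:ℝ)^(δ₀:ℤ) * (p:ℝ) ^ (-(δ:ℤ)) := by
            apply mul_le_mul_of_nonneg_right hxn (le_of_lt (zpow_pos hp0R _))
        _ = (p:ℝ) ^ (-(w:ℤ)) := by
            rw [← zpow_add₀ (ne_of_gt hp0R)]
            congr 1
            omega
    have hdvd : ((p:ℤ) ^ w) ∣ (m' : ℤ) := by
      rw [← Padic.norm_int_le_pow_iff_dvd]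
      push_cast
      exact hnorm
    have hdvdn : p ^ w ∣ m' := by exact_mod_cast hdvd
    obtain ⟨m, hmm⟩ := hdvdn
    refine ⟨m, ?_, ?_⟩
    · have h1 : (σ + δ).toNat = (σ + δ₀).toNat + w := by omega
      rw [h1, pow_add, hmm, mul_comm (p ^ w) m] at hm'
      exact lt_of_mul_lt_mul_right hm' (Nat.zero_le _)
    · rw [hxm, hmm]
      push_cast
      rw [mul_comm ((p:ℚ_[p])^w) (m:ℚ_[p]), mul_assoc]
      congr 1
      rw [← zpow_natCast (p:ℚ_[p]) w, ← zpow_add₀ hpQ]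
      congr 1
      omega

theorem stmt_10 (p : ℕ) [Fact p.Prime] (σ : ℤ) (c : ℚ_[p]) (r : ℤ) (hr : -σ ≤ r) :
    {n : ℚ_[p] | n ∈ Rset p σ ∧ ‖n - c‖ ≤ (p : ℝ) ^ r}.Finite ∧
    Nat.card {n : ℚ_[p] | n ∈ Rset p σ ∧ ‖n - c‖ ≤ (p : ℝ) ^ r} = p ^ (r + σ).toNat := by
  classical
  have hp : p.Prime := Fact.out
  have hp1 : 1 < p := hp.one_lt
  have hpQ : (p:ℚ_[p]) ≠ 0 := Nat.cast_ne_zero.mpr hp.ne_zero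
  have hp0R : (0:ℝ) < p := by exact_mod_cast hp.pos
  have hp1R : (1:ℝ) ≤ p := by exact_mod_cast hp.one_le
  -- choose δ₀
  set k₀ : ℕ := ⌊‖c‖⌋₊ + 1 with hk₀
  set δ₀ : ℕ := max (max k₀ r.toNat) (-σ).toNat with hδ₀
  have hδr : r ≤ (δ₀:ℤ) := by
    have h1 : r.toNat ≤ δ₀ := le_trans (le_max_right _ _) (le_max_left _ _)
    have := Int.self_le_toNat r
    omega
  have hδσ : -σ ≤ (δ₀:ℤ) := by
    have h1 : (-σ).toNat ≤ δ₀ := le_max_right _ _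
    have := Int.self_le_toNat (-σ)
    omega
  have hck : k₀ ≤ δ₀ := le_trans (le_max_left _ _) (le_max_left _ _)
  have hcnorm : ‖c‖ ≤ (p:ℝ)^(δ₀:ℤ) := by
    have h1 : ‖c‖ < (k₀:ℝ) := by
      rw [hk₀]
      push_cast
      exact Nat.lt_floor_add_one _
    have h2 : k₀ < p ^ δ₀ := by
      calc k₀ ≤ δ₀ := hck
        _ < 2 ^ δ₀ := Nat.lt_two_pow_self
        _ ≤ p ^ δ₀ := Nat.pow_le_pow_left hp.two_le δ₀
    have h3 : ((k₀:ℝ)) ≤ ((p ^ δ₀ : ℕ) : ℝ) := by exact_mod_cast h2.le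
    have h4 : ((p ^ δ₀ : ℕ) : ℝ) = (p:ℝ)^(δ₀:ℤ) := by
      push_cast
      rw [zpow_natCast]
    linarith
  set N : ℕ := (σ + δ₀).toNat with hNdef
  set u : ℕ := ((δ₀:ℤ) - r).toNat with hudef
  have hN : (N:ℤ) = σ + δ₀ := Int.toNat_of_nonneg (by omega)
  have hu : (u:ℤ) = (δ₀:ℤ) - r := Int.toNat_of_nonneg (by omega)
  have huN : u ≤ N := by omega
  have hNu : N - u = (r + σ).toNat := by omega
  set π : ℚ_[p] := (p:ℚ_[p]) ^ (-(δ₀:ℤ)) with hπdef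
  have hπnorm : ‖π‖ = (p:ℝ)^(δ₀:ℤ) := by
    rw [hπdef, Padic.norm_p_zpow, neg_neg]
  have hπ0 : π ≠ 0 := zpow_ne_zero _ hpQ
  set c' : ℚ_[p] := c * (p:ℚ_[p])^(δ₀:ℤ) with hc'def
  have hcc : c = c' * π := by
    rw [hc'def, hπdef, mul_assoc, ← zpow_add₀ hpQ]
    simp
  have hc'1 : ‖c'‖ ≤ 1 := by
    rw [hc'def, norm_mul, Padic.norm_p_zpow]
    calc ‖c‖ * (p:ℝ)^(-(δ₀:ℤ)) ≤ (p:ℝ)^(δ₀:ℤ) * (p:ℝ)^(-(δ₀:ℤ)) :=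
          mul_le_mul_of_nonneg_right hcnorm (le_of_lt (zpow_pos hp0R _))
      _ = 1 := by rw [← zpow_add₀ (ne_of_gt hp0R)]; simp
  set c'' : ℤ_[p] := ⟨c', hc'1⟩ with hc''def
  set a : ℕ := PadicInt.appr c'' u with hadef
  have ha : a < p ^ u := PadicInt.appr_lt c'' u
  have hac : ‖(a:ℚ_[p]) - c'‖ ≤ (p:ℝ)^(-(u:ℤ)) := by
    have h1 := PadicInt.appr_spec u c''
    rw [← PadicInt.norm_le_pow_iff_mem_span_pow] at h1
    have h2 : ‖((c'' - (a:ℤ_[p]) : ℤ_[p]) : ℚ_[p])‖ ≤ (p:ℝ)^(-(u:ℤ)) := by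
      rw [← PadicInt.norm_def]
      exact_mod_cast h1
    rw [← norm_neg]
    convert h2 using 2
    push_cast
    show -((a:ℚ_[p]) - c') = c' - (a:ℚ_[p])
    ring
    rfl
  set P : ℕ := p ^ u with hPdef
  have hPpos : 0 < P := Nat.pow_pos (by omega)
  set K : ℕ := p ^ (N - u) with hKdef
  have hPK : P * K = p ^ N := by rw [hPdef, hKdef, ← pow_add]; congr 1; omega
  set g : ℕ → ℚ_[p] := fun q => ((a + P * q : ℕ) : ℚ_[p]) * π with hgdef
  have hginj : Function.Injective g := by
    intro q1 q2 h
    rw [hgdef] at h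
    simp only [] at h
    have h2 := mul_right_cancel₀ hπ0 h
    have h3 : a + P * q1 = a + P * q2 := Nat.cast_injective h2
    have h4 : P * q1 = P * q2 := by omega
    exact Nat.eq_of_mul_eq_mul_left hPpos h4
  set F : Finset ℚ_[p] := (Finset.range K).image g with hFdef
  have hcard : F.card = K := by
    rw [hFdef, Finset.card_image_of_injective _ hginj, Finset.card_range]
  -- The key set equality
  have hSF : {n : ℚ_[p] | n ∈ Rset p σ ∧ ‖n - c‖ ≤ (p : ℝ) ^ r} = ↑F := by
    ext n
    simp only [Set.mem_setOf_eq, Finset.coe_image, Set.mem_image, Finset.mem_coe,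
      Finset.mem_range, hFdef, Finset.mem_image]
    constructor
    · rintro ⟨hnR, hnr⟩
      have hn_norm : ‖n‖ ≤ (p:ℝ)^(δ₀:ℤ) := by
        have h1 : n = (n - c) + c := by ring
        calc ‖n‖ = ‖(n - c) + c‖ := by rw [← h1]
          _ ≤ max ‖n - c‖ ‖c‖ := Padic.nonarchimedean _ _
          _ ≤ (p:ℝ)^(δ₀:ℤ) := by
              apply max_le _ hcnorm
              calc ‖n - c‖ ≤ (p:ℝ)^r := hnr
                _ ≤ (p:ℝ)^(δ₀:ℤ) := zpow_le_zpow_right₀ hp1R hδr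
      obtain ⟨m, hmN, hnm⟩ := rep_of_norm_le p σ n δ₀ (by omega) hnR hn_norm
      have hmc' : ‖(m:ℚ_[p]) - c'‖ ≤ (p:ℝ)^(-(u:ℤ)) := by
        have h1 : n - c = ((m:ℚ_[p]) - c') * π := by rw [hnm, hcc, sub_mul]
        have h2 : ‖(m:ℚ_[p]) - c'‖ * (p:ℝ)^(δ₀:ℤ) ≤ (p:ℝ)^r := by
          calc ‖(m:ℚ_[p]) - c'‖ * (p:ℝ)^(δ₀:ℤ) = ‖n - c‖ := by
                rw [h1, norm_mul, hπnorm]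
            _ ≤ (p:ℝ)^r := hnr
        have h3 : (0:ℝ) < (p:ℝ)^(δ₀:ℤ) := zpow_pos hp0R _
        rw [← le_div_iff₀ h3] at h2
        calc ‖(m:ℚ_[p]) - c'‖ ≤ (p:ℝ)^r / (p:ℝ)^(δ₀:ℤ) := h2
          _ = (p:ℝ)^(-(u:ℤ)) := by
              rw [← zpow_sub₀ (ne_of_gt hp0R)]
              congr 1
              omega
      have hma : ‖(m:ℚ_[p]) - (a:ℚ_[p])‖ ≤ (p:ℝ)^(-(u:ℤ)) := by
        have h1 : (m:ℚ_[p]) - a = ((m:ℚ_[p]) - c') + (c' - a) := by ring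
        calc ‖(m:ℚ_[p]) - (a:ℚ_[p])‖ = ‖((m:ℚ_[p]) - c') + (c' - a)‖ := by rw [← h1]
          _ ≤ max ‖(m:ℚ_[p]) - c'‖ ‖c' - (a:ℚ_[p])‖ := Padic.nonarchimedean _ _
          _ ≤ (p:ℝ)^(-(u:ℤ)) := by
              apply max_le hmc'
              rw [norm_sub_rev]
              exact hac
      have hdvd : ((p:ℤ)^u) ∣ ((m:ℤ) - (a:ℤ)) := by
        rw [← Padic.norm_int_le_pow_iff_dvd]
        push_cast
        exact hma
      obtain ⟨t, ht⟩ := hdvd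
      have haz : (a:ℤ) < (p:ℤ)^u := by exact_mod_cast ha
      have ht0 : 0 ≤ t := by
        by_contra hcon
        push_neg at hcon
        have h1 : ((p:ℤ)^u) * t ≤ ((p:ℤ)^u) * (-1) :=
          mul_le_mul_of_nonneg_left (by omega) (by positivity)
        have h2 : (0:ℤ) ≤ (m:ℤ) := Int.natCast_nonneg m
        linarith
      set q : ℕ := t.toNat with hqdef
      have hqt : (q:ℤ) = t := Int.toNat_of_nonneg ht0
      have hmq : m = a + P * q := by
        have h1 : (m:ℤ) = (a:ℤ) + (P:ℤ) * (q:ℤ) := by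
          rw [hqt, hPdef]
          push_cast
          linarith [ht]
        exact_mod_cast h1
      have hqK : q < K := by
        by_contra hcon
        push_neg at hcon
        have h1 : P * K ≤ P * q := Nat.mul_le_mul_left P hcon
        have h2 : m < P * K := by rw [hPK, ← hNdef] at *; exact hmN
        omega
      refine ⟨q, hqK, ?_⟩
      have hgq : g q = ((a + P * q : ℕ) : ℚ_[p]) * π := rfl
      rw [hgq, ← hmq, ← hnm]
    · rintro ⟨q, hqK, rfl⟩
      have hgq : g q = ((a + P * q : ℕ) : ℚ_[p]) * π := rfl
      set m : ℕ := a + P * q with hmdef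
      have hmN : m < p ^ N := by
        rw [← hPK]
        have h1 : P * q + P ≤ P * K := by
          have h2 := Nat.mul_le_mul_left P (Nat.succ_le_of_lt hqK)
          rw [Nat.mul_succ] at h2
          exact h2
        omega
      have hmN' : m < p ^ (σ + (δ₀:ℤ)).toNat := by rw [← hNdef]; exact hmN
      constructor
      · have := mem_Rset_of p σ δ₀ m (by omega) hmN'
        rw [hgq]
        exact this
      · have h1 : g q - c = ((m:ℚ_[p]) - c') * π := by
          rw [hgq, hcc, sub_mul]
        have hmc' : ‖(m:ℚ_[p]) - c'‖ ≤ (p:ℝ)^(-(u:ℤ)) := by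
          have h2 : (m:ℚ_[p]) - c' = ((a:ℚ_[p]) - c') + ((P:ℚ_[p]) * q) := by
            rw [hmdef]
            push_cast
            ring
          have h3 : ‖(P:ℚ_[p]) * (q:ℚ_[p])‖ ≤ (p:ℝ)^(-(u:ℤ)) := by
            rw [norm_mul]
            have h4 : ‖(P:ℚ_[p])‖ = (p:ℝ)^(-(u:ℤ)) := by
              rw [hPdef]
              push_cast
              exact Padic.norm_p_pow u
            have h5 : ‖(q:ℚ_[p])‖ ≤ 1 := by
              have := Padic.norm_int_le_one (p := p) (q:ℤ)
              push_cast at this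
              exact this
            calc ‖(P:ℚ_[p])‖ * ‖(q:ℚ_[p])‖ ≤ ‖(P:ℚ_[p])‖ * 1 :=
                  mul_le_mul_of_nonneg_left h5 (norm_nonneg _)
              _ = (p:ℝ)^(-(u:ℤ)) := by rw [mul_one, h4]
          calc ‖(m:ℚ_[p]) - c'‖ = ‖((a:ℚ_[p]) - c') + ((P:ℚ_[p]) * q)‖ := by rw [← h2]
            _ ≤ max ‖(a:ℚ_[p]) - c'‖ ‖(P:ℚ_[p]) * (q:ℚ_[p])‖ := Padic.nonarchimedean _ _
            _ ≤ (p:ℝ)^(-(u:ℤ)) := max_le hac h3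
        calc ‖g q - c‖ = ‖(m:ℚ_[p]) - c'‖ * (p:ℝ)^(δ₀:ℤ) := by
              rw [h1, norm_mul, hπnorm]
          _ ≤ (p:ℝ)^(-(u:ℤ)) * (p:ℝ)^(δ₀:ℤ) :=
              mul_le_mul_of_nonneg_right hmc' (le_of_lt (zpow_pos hp0R _))
          _ = (p:ℝ)^r := by
              rw [← zpow_add₀ (ne_of_gt hp0R)]
              congr 1
              omega
  constructor
  · rw [hSF]; exact F.finite_toSet
  · rw [hSF, Nat.card_coe_set_eq, Set.ncard_coe_finset, hcard, hKdef, hNu]
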